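/- Let λ ∈ ℂ, k ≥ 1, and let J_λ ∈ ℂ^{k×k} be the Jordan block with eigenvalue λ. Then for every j ∈ {1, …, k}, σ_j(J_λ^n)^{1/n} → |λ| as n → ∞; that is, all limiting n-th roots of the singular values of the n-th power of a Jordan block equal the absolute value of its eigenvalue. -/

import Mathlib

open Matrix Filter
open scoped ComplexOrder

/-- The `j`-th largest singular value of a square complex matrix `Z` (indexing `j = 0` gives
the largest): the square root of the `j`-th largest eigenvalue of the Hermitian positive
semidefinite matrix `Zᴴ * Z`. -/
noncomputable def sval {k : ℕ} (Z : Matrix (Fin k) (Fin k) ℂ) (j : Fin k) : ℝ :=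
  Real.sqrt
    (((Matrix.isHermitian_conjTranspose_mul_self Z).eigenvalues ∘
      Tuple.sort (Matrix.isHermitian_conjTranspose_mul_self Z).eigenvalues) j.rev)

/-- The `k × k` Jordan block with eigenvalue `lam`: `lam` on the diagonal, `1` on the
superdiagonal, `0` elsewhere. -/
def jordanBlock (lam : ℂ) (k : ℕ) : Matrix (Fin k) (Fin k) ℂ :=
  Matrix.of fun i j => if (j : ℕ) = (i : ℕ) + 1 then 1 else if j = i then lam else 0

section Aux

attribute [local instance] Matrix.frobeniusNormedRing Matrix.frobeniusNormedAlgebra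

variable {k : ℕ}

noncomputable local instance : CompleteSpace (Matrix (Fin k) (Fin k) ℂ) :=
  FiniteDimensional.complete ℂ _

private lemma jb_tri (lam μ : ℂ) (k : ℕ) :
    (Matrix.scalar (Fin k) μ - jordanBlock lam k).BlockTriangular id := by
  intro i j h
  have hij : (j : ℕ) < (i : ℕ) := h
  rw [Matrix.sub_apply, Matrix.scalar_apply,
    Matrix.diagonal_apply_ne _ (Fin.ne_of_val_ne (by omega))]
  simp only [jordanBlock, Matrix.of_apply]
  rw [if_neg (by omega), if_neg (Fin.ne_of_val_ne (by omega))]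
  ring

private lemma jb_det (lam μ : ℂ) (k : ℕ) :
    (Matrix.scalar (Fin k) μ - jordanBlock lam k).det = (μ - lam) ^ k := by
  rw [Matrix.det_of_upperTriangular (jb_tri lam μ k)]
  have : ∀ i : Fin k, (Matrix.scalar (Fin k) μ - jordanBlock lam k) i i = μ - lam := by
    intro i
    rw [Matrix.sub_apply, Matrix.scalar_apply, Matrix.diagonal_apply_eq]
    simp [jordanBlock]
  rw [Finset.prod_congr rfl (fun i _ => this i), Finset.prod_const, Finset.card_univ,
    Fintype.card_fin]

private lemma jb_spectrum (lam : ℂ) (k : ℕ) (hk : 1 ≤ k) :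
    spectrum ℂ (jordanBlock lam k) = {lam} := by
  ext μ
  rw [spectrum.mem_iff, Matrix.isUnit_iff_isUnit_det, isUnit_iff_ne_zero, not_not]
  have : algebraMap ℂ (Matrix (Fin k) (Fin k) ℂ) μ = Matrix.scalar (Fin k) μ := rfl
  rw [this, jb_det, pow_eq_zero_iff (by omega), sub_eq_zero]
  simp [eq_comm]

private lemma jb_spectralRadius (lam : ℂ) (k : ℕ) (hk : 1 ≤ k) :
    spectralRadius ℂ (jordanBlock lam k) = (‖lam‖₊ : ENNReal) := by
  rw [spectralRadius, jb_spectrum lam k hk]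
  simp

private lemma jb_tri' (lam : ℂ) (k : ℕ) : (jordanBlock lam k).BlockTriangular id := by
  intro i j h
  have hij : (j : ℕ) < (i : ℕ) := h
  simp only [jordanBlock, Matrix.of_apply]
  rw [if_neg (by omega), if_neg (Fin.ne_of_val_ne (by omega))]

private lemma jb_detself (lam : ℂ) (k : ℕ) : (jordanBlock lam k).det = lam ^ k := by
  rw [Matrix.det_of_upperTriangular (jb_tri' lam k)]
  have : ∀ i : Fin k, jordanBlock lam k i i = lam := by
    intro i; simp [jordanBlock]
  rw [Finset.prod_congr rfl (fun i _ => this i), Finset.prod_const, Finset.card_univ,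
    Fintype.card_fin]

/-- Gelfand's formula for the Jordan block, in real form. -/
private lemma jb_gelfand (lam : ℂ) (hk : 1 ≤ k) :
    Tendsto (fun n : ℕ => ‖jordanBlock lam k ^ n‖ ^ ((n : ℝ)⁻¹)) atTop
      (nhds (‖lam‖)) := by
  have h := spectrum.pow_nnnorm_pow_one_div_tendsto_nhds_spectralRadius (jordanBlock lam k)
  rw [jb_spectralRadius lam k hk] at h
  have h2 := (ENNReal.tendsto_toReal (by simp)).comp h
  have : ‖lam‖ = ((‖lam‖₊ : ENNReal)).toReal := by
    simp
  rw [this]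
  refine h2.congr fun n => ?_
  simp only [Function.comp_apply, one_div]
  rw [← ENNReal.toReal_rpow]
  simp

private lemma trace_eq_sum_eigs (A : Matrix (Fin k) (Fin k) ℂ) (hA : A.IsHermitian) :
    A.trace = (∑ i, hA.eigenvalues i : ℝ) := by
  conv_lhs => rw [hA.spectral_theorem, Unitary.conjStarAlgAut_apply]
  rw [trace_mul_cycle, (Matrix.mem_unitaryGroup_iff').mp (hA.eigenvectorUnitary).2, one_mul,
    trace_diagonal]
  push_cast
  rfl

private lemma norm_sq_eq_trace (Z : Matrix (Fin k) (Fin k) ℂ) :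
    ‖Z‖ ^ 2 = Complex.re (Zᴴ * Z).trace := by
  rw [Matrix.frobenius_norm_def, ← Real.rpow_natCast _ 2, ← Real.rpow_mul (by positivity)]
  norm_num
  rw [Matrix.trace, Complex.re_sum]
  refine Finset.sum_comm.trans (Finset.sum_congr rfl fun i _ => ?_)
  rw [Matrix.diag_apply, Matrix.mul_apply, Complex.re_sum]
  refine Finset.sum_congr rfl fun j _ => ?_
  rw [Matrix.conjTranspose_apply, RCLike.star_def, mul_comm, Complex.mul_conj,
    Complex.ofReal_re, Complex.normSq_eq_norm_sq]

private lemma sum_eigs_eq (Z : Matrix (Fin k) (Fin k) ℂ) :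
    ∑ i, (Matrix.isHermitian_conjTranspose_mul_self Z).eigenvalues i = ‖Z‖ ^ 2 := by
  have h := trace_eq_sum_eigs _ (Matrix.isHermitian_conjTranspose_mul_self Z)
  have h2 := norm_sq_eq_trace Z
  rw [h] at h2
  rw [h2, Complex.ofReal_re]

private lemma eig_le (Z : Matrix (Fin k) (Fin k) ℂ) (i : Fin k) :
    (Matrix.isHermitian_conjTranspose_mul_self Z).eigenvalues i ≤ ‖Z‖ ^ 2 := by
  rw [← sum_eigs_eq]
  exact Finset.single_le_sum
    (fun l _ => (Matrix.posSemidef_conjTranspose_mul_self Z).eigenvalues_nonneg l)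
    (Finset.mem_univ i)

private lemma prod_eigs_eq (Z : Matrix (Fin k) (Fin k) ℂ) :
    ∏ i, (Matrix.isHermitian_conjTranspose_mul_self Z).eigenvalues i = ‖Z.det‖ ^ 2 := by
  have h := (Matrix.isHermitian_conjTranspose_mul_self Z).det_eq_prod_eigenvalues
  rw [Matrix.det_mul, Matrix.det_conjTranspose, RCLike.star_def, mul_comm,
    Complex.mul_conj, Complex.normSq_eq_norm_sq] at h
  have : ((∏ i, ((Matrix.isHermitian_conjTranspose_mul_self Z).eigenvalues i) : ℝ) : ℂ)
      = ((‖Z.det‖ ^ 2 : ℝ) : ℂ) := by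
    push_cast at h ⊢
    exact h.symm
  exact_mod_cast this

private lemma sval_nonneg (Z : Matrix (Fin k) (Fin k) ℂ) (j : Fin k) : 0 ≤ sval Z j :=
  Real.sqrt_nonneg _

private lemma sval_le_norm (Z : Matrix (Fin k) (Fin k) ℂ) (j : Fin k) : sval Z j ≤ ‖Z‖ := by
  rw [sval, Function.comp_apply]
  calc Real.sqrt _ ≤ Real.sqrt (‖Z‖ ^ 2) := Real.sqrt_le_sqrt (eig_le Z _)
    _ = ‖Z‖ := Real.sqrt_sq (norm_nonneg Z)

private lemma abs_det_div_le_sval (Z : Matrix (Fin k) (Fin k) ℂ) (hdet : Z.det ≠ 0) (j : Fin k) :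
    ‖Z.det‖ / ‖Z‖ ^ (k - 1) ≤ sval Z j := by
  set μ := (Matrix.isHermitian_conjTranspose_mul_self Z).eigenvalues with hμ
  have hnn : ∀ l, 0 ≤ μ l := fun l =>
    (Matrix.posSemidef_conjTranspose_mul_self Z).eigenvalues_nonneg l
  have hP : ∏ l, μ l = ‖Z.det‖ ^ 2 := prod_eigs_eq Z
  have habsne : ‖Z.det‖ ≠ 0 := by simpa using hdet
  have hPpos : 0 < ∏ l, μ l := by
    rw [hP]; positivity
  set i := Tuple.sort μ j.rev with hi
  have hQpos : 0 < ∏ l ∈ Finset.univ.erase i, μ l := by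
    refine Finset.prod_pos fun l _ => ?_
    rcases (hnn l).lt_or_eq with h | h
    · exact h
    · exfalso
      refine hPpos.ne' ?_
      exact Finset.prod_eq_zero (Finset.mem_univ l) h.symm
  have hQle : ∏ l ∈ Finset.univ.erase i, μ l ≤ (‖Z‖ ^ 2) ^ (k - 1) := by
    have := Finset.prod_le_prod (s := Finset.univ.erase i) (fun l _ => hnn l)
      (fun l _ => eig_le Z l)
    rwa [Finset.prod_const, Finset.card_erase_of_mem (Finset.mem_univ i),
      Finset.card_univ, Fintype.card_fin] at this
  have hkey : ‖Z.det‖ ^ 2 / (‖Z‖ ^ 2) ^ (k - 1) ≤ μ i := by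
    have hmul : μ i * ∏ l ∈ Finset.univ.erase i, μ l = ∏ l, μ l :=
      Finset.mul_prod_erase Finset.univ μ (Finset.mem_univ i)
    have hμi : μ i = (∏ l, μ l) / ∏ l ∈ Finset.univ.erase i, μ l := by
      field_simp [hQpos.ne', ← hmul]
      exact hmul
    rw [hμi, hP]
    exact div_le_div_of_nonneg_left (by positivity) hQpos hQle
  have : sval Z j = Real.sqrt (μ i) := by rw [sval, Function.comp_apply]
  rw [this]
  calc ‖Z.det‖ / ‖Z‖ ^ (k - 1)
      = Real.sqrt (‖Z.det‖ ^ 2 / (‖Z‖ ^ 2) ^ (k - 1)) := by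
        rw [← pow_mul, mul_comm 2 (k-1), pow_mul,
          Real.sqrt_div (by positivity), Real.sqrt_sq (by positivity),
          Real.sqrt_sq (by positivity)]
    _ ≤ Real.sqrt (μ i) := Real.sqrt_le_sqrt hkey

/-- For a `k × k` Jordan block with eigenvalue `lam`, every limiting
`n`-th root of the singular values of its `n`-th power equals `|lam|`:
`σ_j((J_λ)^n)^{1/n} → |λ|` for all `j`. -/
theorem sval_pow_root_jordanBlock_tendsto
    (lam : ℂ) (k : ℕ) (hk : 1 ≤ k) :
    ∀ j : Fin k, Tendsto (fun n : ℕ => sval (jordanBlock lam k ^ n) j ^ ((n : ℝ)⁻¹))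
      atTop (nhds (‖lam‖)) := by
  intro j
  set J := jordanBlock lam k with hJ
  have hgel : Tendsto (fun n : ℕ => ‖J ^ n‖ ^ ((n : ℝ)⁻¹)) atTop (nhds (‖lam‖)) :=
    jb_gelfand lam hk
  have hupper : ∀ n : ℕ, sval (J ^ n) j ^ ((n : ℝ)⁻¹) ≤ ‖J ^ n‖ ^ ((n : ℝ)⁻¹) :=
    fun n => Real.rpow_le_rpow (sval_nonneg _ _) (sval_le_norm _ _) (by positivity)
  rcases eq_or_ne lam 0 with hlam | hlam
  · have h0 : Tendsto (fun _ : ℕ => (0 : ℝ)) atTop (nhds (‖lam‖)) := by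
      rw [hlam, norm_zero]; exact tendsto_const_nhds
    exact tendsto_of_tendsto_of_tendsto_of_le_of_le h0 hgel
      (fun n => Real.rpow_nonneg (sval_nonneg _ _) _) hupper
  · -- lam ≠ 0
    have habs : 0 < ‖lam‖ := norm_pos_iff.mpr hlam
    have hdet : ∀ n : ℕ, (J ^ n).det ≠ 0 := by
      intro n
      rw [Matrix.det_pow, jb_detself]
      exact pow_ne_zero _ (pow_ne_zero _ hlam)
    have hlow_t : Tendsto
        (fun n : ℕ => ‖lam‖ ^ k / (‖J ^ n‖ ^ ((n : ℝ)⁻¹)) ^ (k - 1)) atTop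
        (nhds (‖lam‖)) := by
      have := Tendsto.div (tendsto_const_nhds
          (x := ‖lam‖ ^ k) (f := atTop)) (hgel.pow (k - 1))
        (pow_ne_zero _ habs.ne')
      have heq : ‖lam‖ ^ k / ‖lam‖ ^ (k - 1) = ‖lam‖ := by
        rw [show k = (k - 1) + 1 by omega, pow_succ, Nat.add_sub_cancel]
        field_simp
      rwa [heq] at this
    refine tendsto_of_tendsto_of_tendsto_of_le_of_le' hlow_t hgel ?_
      (Eventually.of_forall hupper)
    filter_upwards [eventually_ge_atTop 1] with n hn
    have hnR : (0 : ℝ) < n := by exact_mod_cast hn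
    have hb := abs_det_div_le_sval (J ^ n) (hdet n) j
    have habsdet : ‖(J ^ n).det‖ = ‖lam‖ ^ (k * n) := by
      rw [Matrix.det_pow, jb_detself, ← pow_mul, norm_pow]
    rw [habsdet] at hb
    have h1 : (‖lam‖ ^ (k * n) / ‖J ^ n‖ ^ (k - 1)) ^ ((n : ℝ)⁻¹)
        ≤ sval (J ^ n) j ^ ((n : ℝ)⁻¹) :=
      Real.rpow_le_rpow (by positivity) hb (by positivity)
    refine le_trans (le_of_eq ?_) h1
    rw [Real.div_rpow (by positivity) (by positivity)]
    congr 1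
    · rw [← Real.rpow_natCast (‖lam‖) (k * n), ← Real.rpow_mul habs.le,
        ← Real.rpow_natCast (‖lam‖) k]
      congr 1
      push_cast
      field_simp
    · rw [← Real.rpow_natCast ‖J ^ n‖ (k - 1), ← Real.rpow_mul (norm_nonneg _),
        ← Real.rpow_natCast (‖J ^ n‖ ^ ((n : ℝ)⁻¹)) (k - 1), ← Real.rpow_mul (norm_nonneg _)]
      ring_nf

end Aux
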